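/- For a probability distribution P on a finite set A and any probability distribution Q on A with Q(a) > 0 for all a, and any λ > 0, the sum ∑_{a∈A} P(a)/Q(a)^λ is at least (∑_{a∈A} P(a)^{1/(1+λ)})^{1+λ}, with equality when Q(a) is proportional to P(a)^{1/(1+λ)}. -/

import Mathlib

open Finset Real

theorem holder_opt_step
    (A : Type*) [Fintype A] [Nonempty A]
    (P Q : A → ℝ) (l : ℝ) (hl : 0 < l)
    (hP : ∀ a, 0 ≤ P a) (hPsum : ∑ a, P a = 1)
    (hQ : ∀ a, 0 < Q a) (hQsum : ∑ a, Q a = 1) :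
    ((∑ a, (P a) ^ (1 / (1 + l))) ^ (1 + l) ≤ ∑ a, P a / (Q a) ^ l) ∧
    ((∀ a, Q a = (P a) ^ (1 / (1 + l)) / ∑ b, (P b) ^ (1 / (1 + l))) →
      ∑ a, P a / (Q a) ^ l = (∑ a, (P a) ^ (1 / (1 + l))) ^ (1 + l)) := by
  have h1l : (0:ℝ) < 1 + l := by linarith
  set e : ℝ := 1 / (1 + l) with he
  have he_pos : 0 < e := by positivity
  have he_ne : e ≠ 0 := he_pos.ne'
  have heq1 : e * (1 + l) = 1 := by rw [he]; field_simp
  have hconj : (1 + l).HolderConjugate ((1 + l) / l) := by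
    rw [Real.holderConjugate_iff]
    constructor
    · linarith
    · field_simp
  have hterm_nonneg : ∀ a, 0 ≤ P a / (Q a) ^ l := fun a =>
    div_nonneg (hP a) (rpow_nonneg (hQ a).le _)
  have hsum_nonneg : 0 ≤ ∑ a, P a / (Q a) ^ l := Finset.sum_nonneg fun a _ => hterm_nonneg a
  constructor
  · -- Hölder inequality
    have key := Real.inner_le_Lp_mul_Lq_of_nonneg (s := Finset.univ)
      (f := fun a => (P a / (Q a) ^ l) ^ e) (g := fun a => (Q a) ^ (l * e)) hconj
      (fun a _ => rpow_nonneg (hterm_nonneg a) _)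
      (fun a _ => rpow_nonneg (hQ a).le _)
    have hfg : ∀ a : A, (P a / (Q a) ^ l) ^ e * (Q a) ^ (l * e) = (P a) ^ e := by
      intro a
      rw [Real.div_rpow (hP a) (rpow_nonneg (hQ a).le _), ← Real.rpow_mul (hQ a).le,
        div_mul_cancel₀]
      exact (Real.rpow_pos_of_pos (hQ a) _).ne'
    have hf1 : ∀ a : A, ((P a / (Q a) ^ l) ^ e) ^ (1 + l) = P a / (Q a) ^ l := by
      intro a
      rw [← Real.rpow_mul (hterm_nonneg a), heq1, Real.rpow_one]
    have hg1 : ∀ a : A, ((Q a) ^ (l * e)) ^ ((1 + l) / l) = Q a := by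
      intro a
      rw [← Real.rpow_mul (hQ a).le]
      have : l * e * ((1 + l) / l) = 1 := by rw [he]; field_simp
      rw [this, Real.rpow_one]
    simp only [hfg, hf1, hg1] at key
    rw [hQsum, Real.one_rpow, mul_one] at key
    calc (∑ a, (P a) ^ e) ^ (1 + l)
        ≤ ((∑ a, P a / (Q a) ^ l) ^ (1 / (1 + l))) ^ (1 + l) :=
          Real.rpow_le_rpow (Finset.sum_nonneg fun a _ => rpow_nonneg (hP a) _) key h1l.le
      _ = ∑ a, P a / (Q a) ^ l := by
          rw [← Real.rpow_mul hsum_nonneg, ← he, heq1, Real.rpow_one]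
  · -- equality case
    intro hQeq
    set S : ℝ := ∑ b, (P b) ^ e with hS
    have hS_pos : 0 < S := by
      obtain ⟨a, ha⟩ : ∃ a, 0 < P a := by
        by_contra h
        push_neg at h
        have : ∑ a, P a = 0 := Finset.sum_eq_zero fun a _ => le_antisymm (h a) (hP a)
        rw [hPsum] at this; norm_num at this
      refine Finset.sum_pos' (fun b _ => rpow_nonneg (hP b) _) ⟨a, Finset.mem_univ a, ?_⟩
      exact Real.rpow_pos_of_pos ha _
    have hee : e = 1 - e * l := by
      have h := heq1; ring_nf at h ⊢; linarith
    have hterm : ∀ a : A, P a / (Q a) ^ l = S ^ l * (P a) ^ e := by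
      intro a
      rcases eq_or_lt_of_le (hP a) with hPa | hPa
      · simp [hQeq a, ← hPa, Real.zero_rpow he_ne, Real.zero_rpow hl.ne']
      · have h1 : (Q a) ^ l = (P a) ^ (e * l) / S ^ l := by
          rw [hQeq a, Real.div_rpow (rpow_nonneg (hP a) _) hS_pos.le,
            ← Real.rpow_mul (hP a)]
        rw [h1, div_div_eq_mul_div, mul_comm (P a) (S ^ l), mul_div_assoc]
        congr 1
        rw [hee, Real.rpow_sub hPa, Real.rpow_one, ← hee]
    calc ∑ a, P a / (Q a) ^ l = ∑ a, S ^ l * (P a) ^ e := by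
          exact Finset.sum_congr rfl fun a _ => hterm a
      _ = S ^ l * S := by rw [← Finset.mul_sum]
      _ = S ^ (1 + l) := by
          rw [Real.rpow_add hS_pos, Real.rpow_one, mul_comm]
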